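/- Let G be a torsion-free abelian group and let R be a G-graded commutative ring. If 𝔭 is a prime ideal of R, then 𝔭*, the ideal of R generated by all homogeneous elements of R contained in 𝔭 (equivalently, the largest graded ideal of R contained in 𝔭), is a prime ideal of R. -/

import Mathlib

/-- If a graded ring is graded by a group `G` that admits an injective additive homomorphism
into a linearly ordered abelian group, then the homogeneous core of a prime ideal is prime. -/
theorem homogeneousCore_isPrime_of_orderEmbedding
    {G : Type*} [AddCommGroup G] [DecidableEq G]
    {L : Type*} [AddCommGroup L] [LinearOrder L] [IsOrderedAddMonoid L] (f : G →+ L) (hf : Function.Injective f)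
    {R : Type*} [CommRing R] (𝒜 : G → AddSubgroup R) [GradedRing 𝒜]
    (𝔭 : Ideal R) (h𝔭 : 𝔭.IsPrime) :
    (Ideal.homogeneousCore 𝒜 𝔭).toIdeal.IsPrime := by
  letI lo0 : LinearOrder G := LinearOrder.lift' f hf
  letI lo : LinearOrder G :=
    { lo0 with
      toDecidableEq := ‹DecidableEq G›
      compare_eq_compareOfLessAndEq := fun a b => by
        have h1 := lo0.compare_eq_compareOfLessAndEq a b
        convert h1 using 2 }
  letI : IsOrderedAddMonoid G :=
    { add_le_add_left := fun a b h c => by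
        show f (a + c) ≤ f (b + c)
        have h' : f a ≤ f b := h
        simp only [map_add]
        exact add_le_add h' le_rfl }
  exact Ideal.IsPrime.homogeneousCore (ι := G) (σ := AddSubgroup R) (𝒜 := 𝒜) h𝔭

/-- If `𝔭` is a prime ideal of a `G`-graded commutative ring with `G` a torsion-free abelian
group, then `𝔭*` (the largest graded ideal contained in `𝔭`) is a prime ideal. -/
theorem homogeneousCore_isPrime
    {G : Type*} [AddCommGroup G] [DecidableEq G]
    (hG : ∀ (n : ℕ) (x : G), n ≠ 0 → n • x = 0 → x = 0)
    {R : Type*} [CommRing R] (𝒜 : G → AddSubgroup R) [GradedRing 𝒜]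
    (𝔭 : Ideal R) (h𝔭 : 𝔭.IsPrime) :
    (Ideal.homogeneousCore 𝒜 𝔭).toIdeal.IsPrime := by
  classical
  -- We embed `G` into a `ℚ`-vector space (its localization at `ℤ \ {0}`), which in turn
  -- embeds into a lexicographically ordered space of finitely supported functions.
  set S := nonZeroDivisors ℤ
  let V := LocalizedModule S G
  let mk : G →ₗ[ℤ] V := LocalizedModule.mkLinearMap S G
  have hmk : Function.Injective mk := by
    intro x y h
    have h' : LocalizedModule.mk x (1 : S) = LocalizedModule.mk y 1 := h
    rw [LocalizedModule.mk_eq] at h'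
    obtain ⟨u, hu⟩ := h'
    simp only [one_smul] at hu
    have hu' : (u : ℤ) • x = (u : ℤ) • y := hu
    have hz : (u : ℤ) • (x - y) = 0 := by rw [smul_sub, hu', sub_self]
    have hu0 : (u : ℤ) ≠ 0 := nonZeroDivisors.coe_ne_zero u
    have hx : x - y = 0 := by
      rcases lt_or_gt_of_ne hu0 with hlt | hgt
      · refine hG (-(u : ℤ)).toNat _ (by omega) ?_
        have : ((-(u : ℤ)).toNat : ℤ) • (x - y) = 0 := by
          rw [Int.toNat_of_nonneg (by omega), neg_smul, hz, neg_zero]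
        exact_mod_cast this
      · refine hG ((u : ℤ)).toNat _ (by omega) ?_
        have : (((u : ℤ)).toNat : ℤ) • (x - y) = 0 := by
          rw [Int.toNat_of_nonneg (by omega)]; exact hz
        exact_mod_cast this
    exact sub_eq_zero.mp hx
  letI : Module ℚ V := Module.compHom V (Rat.castHom (FractionRing ℤ))
  let ι := Module.Basis.ofVectorSpaceIndex ℚ V
  let b : Module.Basis ι ℚ V := Module.Basis.ofVectorSpace ℚ V
  letI : LinearOrder ι := IsWellOrder.linearOrder WellOrderingRel
  let f : G →+ Lex (ι →₀ ℚ) :=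
    { toFun := fun x => toLex (b.repr (mk x))
      map_zero' := by simp
      map_add' := fun x y => by simp [map_add] }
  have hf : Function.Injective f := fun x y h => by
    apply hmk
    apply b.repr.injective
    exact toLex.injective h
  exact homogeneousCore_isPrime_of_orderEmbedding f hf 𝒜 𝔭 h𝔭
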